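/- Let Λ_r^+ = {X ∈ 𝕊_+^n : rank(X) ≤ r}, where 𝕊_+^n is the set of n×n symmetric positive semidefinite matrices, and Λ_r = {X ∈ 𝕊^n : rank(X) ≤ r}. Then for every symmetric matrix Z ∈ 𝕊^n, dist(Z, Λ_r^+) ≤ 2·dist(Z, 𝕊_+^n) + dist(Z, Λ_r), where dist is with respect to the Frobenius norm. -/

import Mathlib

attribute [local instance] Matrix.frobeniusNormedAddCommGroup

open Matrix

lemma fro_norm_eq {n : ℕ} (A : Matrix (Fin n) (Fin n) ℝ) :
    ‖A‖ = Real.sqrt (∑ i, ∑ j, (A i j) ^ 2) := by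
  rw [Matrix.frobenius_norm_def, Real.sqrt_eq_rpow]
  congr 1
  refine Finset.sum_congr rfl fun i _ => Finset.sum_congr rfl fun j _ => ?_
  rw [Real.rpow_two, Real.norm_eq_abs, sq_abs]

lemma sum_sq_eq_trace {n : ℕ} (A : Matrix (Fin n) (Fin n) ℝ) :
    ∑ i, ∑ j, (A i j) ^ 2 = (Aᵀ * A).trace := by
  simp [Matrix.trace, Matrix.mul_apply, Matrix.diag, sq]
  exact Finset.sum_comm

lemma fro_norm_unitary {n : ℕ} (U A : Matrix (Fin n) (Fin n) ℝ)
    (hU : star U * U = 1) :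
    ‖U * A * star U‖ = ‖A‖ := by
  rw [fro_norm_eq, fro_norm_eq, sum_sq_eq_trace, sum_sq_eq_trace]
  have : (U * A * star U)ᵀ * (U * A * star U) = U * (Aᵀ * A) * star U := by
    have hsU : star U = Uᵀ := rfl
    have h1 : Uᵀ * U = 1 := by rw [← hsU]; exact hU
    calc (U * A * star U)ᵀ * (U * A * star U)
        = U * (Aᵀ * (Uᵀ * U) * A) * star U := by
          simp [Matrix.transpose_mul, hsU, Matrix.mul_assoc]
      _ = U * (Aᵀ * A) * star U := by rw [h1]; simp [Matrix.mul_assoc]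
  rw [this, Matrix.trace_mul_comm, ← Matrix.mul_assoc, hU, Matrix.one_mul]

lemma key {n : ℕ} {Y W : Matrix (Fin n) (Fin n) ℝ} (hY : Y.PosSemidef) (hW : W.IsHermitian) :
    ∃ X : Matrix (Fin n) (Fin n) ℝ, X.PosSemidef ∧ X.rank ≤ W.rank ∧ ‖Y - X‖ ≤ ‖Y - W‖ := by
  classical
  set U : Matrix (Fin n) (Fin n) ℝ := (hW.eigenvectorUnitary : Matrix (Fin n) (Fin n) ℝ) with hUdef
  have hUmem : U ∈ Matrix.unitaryGroup (Fin n) ℝ := (hW.eigenvectorUnitary).2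
  have hU1 : star U * U = 1 := hUmem.1
  have hU2 : U * star U = 1 := hUmem.2
  set d := hW.eigenvalues with hd
  have hspec : W = U * Matrix.diagonal d * star U := by
    have := hW.spectral_theorem
    rwa [RCLike.ofReal_real_eq_id, Function.id_comp] at this
  set Dp : Matrix (Fin n) (Fin n) ℝ := Matrix.diagonal (fun i => max (d i) 0) with hDp
  refine ⟨U * Dp * star U, ?_, ?_, ?_⟩
  · have h1 : Dp.PosSemidef := Matrix.posSemidef_diagonal_iff.mpr fun i => le_max_right _ _
    have := h1.mul_mul_conjTranspose_same U
    rwa [← Matrix.star_eq_conjTranspose] at this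
  · have h1 : (U * Dp * star U).rank ≤ Dp.rank :=
      le_trans (Matrix.rank_mul_le_left _ _) (Matrix.rank_mul_le_right _ _)
    have h2 : Dp.rank ≤ (Matrix.diagonal d).rank := by
      rw [hDp, Matrix.rank_diagonal, Matrix.rank_diagonal]
      refine Fintype.card_subtype_mono _ _ fun i hi => ?_
      intro h0
      exact hi (by simp [h0])
    have h3 : (Matrix.diagonal d).rank = W.rank := (hW.rank_eq_rank_diagonal).symm
    omega
  · have hY' : (star U * Y * U).PosSemidef := by
      have := hY.mul_mul_conjTranspose_same (star U)
      rwa [Matrix.star_eq_conjTranspose, Matrix.conjTranspose_conjTranspose] at this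
    have hdiag : ∀ i, 0 ≤ (star U * Y * U) i i := by
      intro i
      have := hY'.dotProduct_mulVec_nonneg (Pi.single i 1)
      simpa [dotProduct, Matrix.mulVec, Pi.single_apply, Finset.mul_sum] using this
    have gen : ∀ M : Matrix (Fin n) (Fin n) ℝ,
        Y - U * M * star U = U * ((star U * Y * U) - M) * star U := by
      intro M
      have h : U * ((star U * Y * U) - M) * star U
          = (U * star U) * Y * (U * star U) - U * M * star U := by noncomm_ring
      rw [h, hU2, Matrix.one_mul, Matrix.mul_one]
    have e1 : Y - U * Dp * star U = U * ((star U * Y * U) - Dp) * star U := gen Dp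
    have e2 : Y - W = U * ((star U * Y * U) - Matrix.diagonal d) * star U := by
      rw [hspec]; exact gen _
    rw [e1, e2, fro_norm_unitary _ _ hU1, fro_norm_unitary _ _ hU1, fro_norm_eq, fro_norm_eq]
    apply Real.sqrt_le_sqrt
    refine Finset.sum_le_sum fun i _ => Finset.sum_le_sum fun j _ => ?_
    by_cases hij : i = j
    · subst hij
      simp only [Matrix.sub_apply, Matrix.diagonal_apply_eq, hDp]
      have := hdiag i
      rcases le_or_gt 0 (d i) with h | h
      · rw [max_eq_left h]
      · rw [max_eq_right h.le]
        nlinarith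
    · simp [Matrix.sub_apply, Matrix.diagonal_apply_ne _ hij, hDp]

lemma le_infDist' {M : Type*} [MetricSpace M] {s : Set M} (hs : s.Nonempty) {x : M} {a : ℝ}
    (h : ∀ y ∈ s, a ≤ dist x y) : a ≤ Metric.infDist x s := by
  by_contra hlt
  push_neg at hlt
  obtain ⟨y, hy, hdy⟩ := (Metric.infDist_lt_iff hs).mp hlt
  exact absurd (h y hy) (not_le.mpr hdy)

theorem stmt6 (n r : ℕ) (Z : Matrix (Fin n) (Fin n) ℝ) (hZ : Z.IsHermitian) :
    Metric.infDist Z {X : Matrix (Fin n) (Fin n) ℝ | X.PosSemidef ∧ X.rank ≤ r} ≤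
      2 * Metric.infDist Z {X : Matrix (Fin n) (Fin n) ℝ | X.PosSemidef} +
        Metric.infDist Z {X : Matrix (Fin n) (Fin n) ℝ | X.IsHermitian ∧ X.rank ≤ r} := by
  classical
  set S1 : Set (Matrix (Fin n) (Fin n) ℝ) := {X | X.PosSemidef ∧ X.rank ≤ r} with hS1
  set S2 : Set (Matrix (Fin n) (Fin n) ℝ) := {X | X.PosSemidef} with hS2
  set S3 : Set (Matrix (Fin n) (Fin n) ℝ) := {X | X.IsHermitian ∧ X.rank ≤ r} with hS3
  have hne2 : S2.Nonempty := ⟨0, Matrix.PosSemidef.zero⟩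
  have hne3 : S3.Nonempty := ⟨0, Matrix.isHermitian_zero, by simp [Matrix.rank_zero]⟩
  have stepA : ∀ Y ∈ S2, ∀ W ∈ S3,
      Metric.infDist Z S1 ≤ 2 * dist Z Y + dist Z W := by
    intro Y hY W hW
    obtain ⟨X, hXpsd, hXrank, hXnorm⟩ := key hY hW.1
    have hXmem : X ∈ S1 := ⟨hXpsd, le_trans hXrank hW.2⟩
    have t1 : Metric.infDist Z S1 ≤ dist Z X := Metric.infDist_le_dist_of_mem hXmem
    have t2 : dist Z X ≤ dist Z Y + dist Y X := dist_triangle _ _ _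
    have t3 : dist Y X ≤ dist Y W := by
      rw [dist_eq_norm, dist_eq_norm]; exact hXnorm
    have t4 : dist Y W ≤ dist Y Z + dist Z W := dist_triangle _ _ _
    have t5 : dist Y Z = dist Z Y := dist_comm _ _
    linarith
  have stepB : ∀ Y ∈ S2,
      Metric.infDist Z S1 - 2 * dist Z Y ≤ Metric.infDist Z S3 := by
    intro Y hY
    refine le_infDist' hne3 fun W hW => ?_
    linarith [stepA Y hY W hW]
  have stepC : (Metric.infDist Z S1 - Metric.infDist Z S3) / 2 ≤ Metric.infDist Z S2 := by
    refine le_infDist' hne2 fun Y hY => ?_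
    linarith [stepB Y hY]
  linarith
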